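/- Let σ be a substitution and let Γ, Δ be CNF formulas. If Γ ⊢₁ Δ, then Γ↾σ ⊢₁ Δ↾σ. -/
import Mathlib


namespace PaperMaxSAT

/-- Variables are natural numbers. -/
abbrev Var := ℕ

/-- A literal is a variable together with a polarity. -/
abbrev Lit := Var × Bool

/-- Negation of a literal. -/
def negLit (l : Lit) : Lit := (l.1, !l.2)

/-- A clause is a finite set of literals. -/
abbrev Clause := Finset Lit

/-- A CNF formula is a finite multiset of clauses. -/
abbrev CNF := Multiset Clause

/-- A tautological clause contains a literal together with its negation. -/
def isTaut (C : Clause) : Prop := ∃ l ∈ C, negLit l ∈ C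

/-- The value of a substitution at a variable: a Boolean constant or a literal. -/
abbrev SubVal := Bool ⊕ Lit

/-- Negation on substitution values. -/
def negSV : SubVal → SubVal
  | .inl b => .inl !b
  | .inr l => .inr (negLit l)

/-- A substitution maps each variable to `0`, `1` or a literal. -/
abbrev Sub := Var → SubVal

/-- Applying a substitution to a literal, respecting `σ(¬x) = ¬σ(x)`. -/
def appLit (σ : Sub) (l : Lit) : SubVal :=
  if l.2 then σ l.1 else negSV (σ l.1)

/-- The identity substitution. -/
def idSub : Sub := fun v => .inr (v, true)

/-- `σ(C) = 1` : some literal of `C` is mapped to true by `σ`. -/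
def clauseTrue (σ : Sub) (C : Clause) : Prop := ∃ l ∈ C, appLit σ l = Sum.inl true

instance (σ : Sub) (C : Clause) : Decidable (clauseTrue σ C) := by
  unfold clauseTrue; infer_instance

/-- `C↾σ` : the clause whose literals are the images under `σ` of the literals
of `C` mapped to literals (literals mapped to `0` are dropped). -/
def restrictClause (σ : Sub) (C : Clause) : Clause :=
  C.biUnion (fun l => match appLit σ l with
    | .inr m => {m}
    | _ => (∅ : Clause))

/-- `Γ↾σ` : restrict every clause of `Γ`; clauses mapped to `1` are removed. -/
def restrictCNF (σ : Sub) (Γ : CNF) : CNF :=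
  (Γ.filter (fun C => ¬ clauseTrue σ C)).map (restrictClause σ)

/-- `σ ⊨ C` : `σ(C) = 1` or `σ(C)` is tautological. -/
def subSat (σ : Sub) (C : Clause) : Prop :=
  clauseTrue σ C ∨ isTaut (restrictClause σ C)

/-- The assignment `¬C`, setting all literals of `C` to false. -/
def negSub (C : Clause) : Sub := fun v =>
  if (v, true) ∈ C then .inl false
  else if (v, false) ∈ C then .inl true
  else .inr (v, true)

/-- The substitution setting the literal `l` to true and touching nothing else. -/
def litSub (l : Lit) : Sub := fun v => if v = l.1 then .inl l.2 else .inr (v, true)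

/-- Unit propagation derives the empty clause. -/
inductive UPFalse : CNF → Prop
  | empty {Γ : CNF} : (∅ : Clause) ∈ Γ → UPFalse Γ
  | step {Γ : CNF} (l : Lit) : ({l} : Clause) ∈ Γ →
      UPFalse (restrictCNF (litSub l) Γ) → UPFalse Γ

/-- The unit clauses `¬l` for `l ∈ C`. -/
def negUnits (C : Clause) : CNF := C.val.map (fun l => ({negLit l} : Clause))

/-- `Γ ⊢₁ C` : unit propagation on `Γ↾¬C` produces the empty clause. -/
def UPimplies (Γ : CNF) (C : Clause) : Prop := UPFalse (Γ + negUnits C)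

/-- `Γ ⊢₁ Δ` : `Γ ⊢₁ D` for every `D ∈ Δ`. -/
def UPimpliesAll (Γ Δ : CNF) : Prop := ∀ D ∈ Δ, UPimplies Γ D

/-- Total assignments. -/
abbrev TAssign := Var → Bool

/-- A total assignment satisfies a clause. -/
def satC (α : TAssign) (C : Clause) : Prop := ∃ l ∈ C, α l.1 = l.2

instance (α : TAssign) (C : Clause) : Decidable (satC α C) := by
  unfold satC; infer_instance

/-- A total assignment satisfies a CNF. -/
def satCNF (α : TAssign) (Γ : CNF) : Prop := ∀ C ∈ Γ, satC α C

/-- `τ ∘ σ` : composition of a total assignment with a substitution. -/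
def comp (τ : TAssign) (σ : Sub) : TAssign := fun v =>
  match σ v with
  | .inl b => b
  | .inr l => if l.2 then τ l.1 else !(τ l.1)

/-- `τ` extends the assignment `¬C`. -/
def extendsNeg (τ : TAssign) (C : Clause) : Prop := ∀ l ∈ C, τ l.1 = !l.2

/-- The cost of a total assignment w.r.t. a set `B` of blocking variables:
the number of blocking variables set to true. -/
def cost (B : Finset Var) (α : TAssign) : ℕ := (B.filter (fun b => α b = true)).card

/-- The cost of a MaxSAT instance encoded with blocking variables `B`:
the minimum cost of a satisfying total assignment. -/
noncomputable def costCNF (B : Finset Var) (Γ : CNF) : ℕ :=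
  sInf {k | ∃ α : TAssign, satCNF α Γ ∧ cost B α = k}

/-- `σ` witnesses that `C` is cost-SR w.r.t. `Γ` (with blocking variables `B`):
the redundancy condition `Γ↾¬C ⊢₁ (Γ ∪ {C})↾σ` and the cost condition. -/
def CostSRwit (B : Finset Var) (Γ : CNF) (C : Clause) (σ : Sub) : Prop :=
  UPimpliesAll (restrictCNF (negSub C) Γ) (restrictCNF σ (C ::ₘ Γ)) ∧
  ∀ τ : TAssign, extendsNeg τ C → cost B (comp τ σ) ≤ cost B τ

/-- `C` is cost-SR w.r.t. `Γ`. -/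
def CostSR (B : Finset Var) (Γ : CNF) (C : Clause) : Prop := ∃ σ, CostSRwit B Γ C σ

/-- A substitution which is an assignment: every value is `0`, `1`,
or the variable itself. -/
def isAssign (σ : Sub) : Prop :=
  ∀ v, σ v = .inl true ∨ σ v = .inl false ∨ σ v = .inr (v, true)

/-- The variables of a clause. -/
def varsClause (C : Clause) : Finset Var := C.image Prod.fst

/-- The variables of a CNF. -/
def varsCNF (Γ : CNF) : Finset Var := (Γ.map varsClause).sup

/-- Membership in the domain of an assignment. -/
def subDom (σ : Sub) (v : Var) : Prop := ∃ b : Bool, σ v = .inl b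

/-- `C` is cost-PR w.r.t. `Γ`: cost-SR witnessed by an assignment. -/
def CostPR (B : Finset Var) (Γ : CNF) (C : Clause) : Prop :=
  ∃ σ, CostSRwit B Γ C σ ∧ isAssign σ

/-- `C` is cost-SPR w.r.t. `Γ`: cost-SR witnessed by an assignment with
domain `dom(¬C) = Var(C)`. -/
def CostSPR (B : Finset Var) (Γ : CNF) (C : Clause) : Prop :=
  ∃ σ, CostSRwit B Γ C σ ∧ isAssign σ ∧ (∀ v, subDom σ v ↔ v ∈ varsClause C)

/-- `C` is cost-LPR w.r.t. `Γ`: cost-SR witnessed by an assignment with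
domain `dom(¬C)` differing from `¬C` on exactly one variable. -/
def CostLPR (B : Finset Var) (Γ : CNF) (C : Clause) : Prop :=
  ∃ σ, CostSRwit B Γ C σ ∧ isAssign σ ∧ (∀ v, subDom σ v ↔ v ∈ varsClause C) ∧
    ((varsClause C).filter (fun v => σ v ≠ negSub C v)).card = 1

/-- `D` is a resolvent of `E₁` and `E₂`. -/
def resolvent (D E₁ E₂ : Clause) : Prop :=
  ∃ x : Var, (x, true) ∈ E₁ ∧ (x, false) ∈ E₂ ∧
    D = E₁.erase (x, true) ∪ E₂.erase (x, false)

/-- A derivation from `Γ` in the calculus with redundancy rule `Red`: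
every clause of the list is in `Γ`, a weakening of an earlier clause,
a resolvent of two earlier clauses, or redundant (w.r.t. `Red`) relative to
`Γ` together with the earlier clauses, using no new variables. -/
def IsDeriv (Red : Finset Var → CNF → Clause → Prop) (B : Finset Var) (Γ : CNF)
    (L : List Clause) : Prop :=
  ∀ i, ∀ hi : i < L.length,
    L[i] ∈ Γ ∨
    (∃ j, ∃ hj : j < i, L[j]'(hj.trans hi) ⊆ L[i]) ∨
    (∃ j k, ∃ hj : j < i, ∃ hk : k < i,
      resolvent L[i] (L[j]'(hj.trans hi)) (L[k]'(hk.trans hi))) ∨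
    (Red B (Γ + (↑(L.take i) : CNF)) L[i] ∧ varsClause L[i] ⊆ varsCNF Γ)

/-- `C ∨ ℓ` is a cost blocked clause (cost-BC) w.r.t. `Γ` and `ℓ`. -/
def CostBC (B : Finset Var) (Γ : CNF) (C : Clause) (l : Lit) : Prop :=
  (∀ D ∈ Γ, negLit l ∈ D → isTaut (C ∪ D.erase (negLit l))) ∧
  ¬(l.2 = true ∧ l.1 ∈ B)

/-- Hamming distance between two total assignments, over the variables in `V`. -/
def HD (V : Finset Var) (α β : TAssign) : ℕ := (V.filter (fun v => α v ≠ β v)).card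

/-- `flip(C, σ) ≥ d` : some total assignment `τ` extending `¬C` has
Hamming distance (over `V`) at least `d` from `τ ∘ σ`. -/
def flipGE (V : Finset Var) (C : Clause) (σ : Sub) (d : ℕ) : Prop :=
  ∃ τ : TAssign, extendsNeg τ C ∧ d ≤ HD V τ (comp τ σ)


/-! ### Auxiliary lemmas for Statement 0 -/

lemma negLit_negLit (l : Lit) : negLit (negLit l) = l := by
  simp [negLit]

lemma negSV_negSV (s : SubVal) : negSV (negSV s) = s := by
  cases s with
  | inl b => simp [negSV]
  | inr l => simp [negSV, negLit_negLit]

lemma appLit_negLit (τ : Sub) (m : Lit) : appLit τ (negLit m) = negSV (appLit τ m) := by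
  cases m with
  | mk v b =>
    cases b <;> simp [appLit, negLit, negSV_negSV]

/-- Applying a substitution to a substitution value. -/
def appSV (τ : Sub) : SubVal → SubVal
  | .inl b => .inl b
  | .inr m => appLit τ m

/-- Composition of substitutions: first `σ`, then `τ`. -/
def compSub (τ σ : Sub) : Sub := fun v => appSV τ (σ v)

lemma appSV_negSV (τ : Sub) (s : SubVal) : appSV τ (negSV s) = negSV (appSV τ s) := by
  cases s with
  | inl b => rfl
  | inr m => simp [negSV, appSV, appLit_negLit]

lemma appLit_compSub (τ σ : Sub) (l : Lit) :
    appLit (compSub τ σ) l = appSV τ (appLit σ l) := by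
  cases l with
  | mk v b =>
    cases b <;> simp [appLit, compSub, appSV_negSV]

lemma mem_restrictClause {σ : Sub} {C : Clause} {m : Lit} :
    m ∈ restrictClause σ C ↔ ∃ l ∈ C, appLit σ l = .inr m := by
  unfold restrictClause
  rw [Finset.mem_biUnion]
  constructor
  · rintro ⟨l, hl, hm⟩
    refine ⟨l, hl, ?_⟩
    rcases h : appLit σ l with b | m'
    · rw [h] at hm; simp at hm
    · rw [h] at hm; simp at hm; rw [hm]
  · rintro ⟨l, hl, h⟩
    exact ⟨l, hl, by rw [h]; simp⟩

lemma restrictClause_compSub (τ σ : Sub) (C : Clause) :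
    restrictClause (compSub τ σ) C = restrictClause τ (restrictClause σ C) := by
  ext m
  rw [mem_restrictClause, mem_restrictClause]
  constructor
  · rintro ⟨l, hl, h⟩
    rw [appLit_compSub] at h
    rcases h' : appLit σ l with b | m'
    · rw [h', appSV] at h; exact absurd h (by simp)
    · rw [h', appSV] at h
      exact ⟨m', mem_restrictClause.2 ⟨l, hl, h'⟩, h⟩
  · rintro ⟨m', hm', h⟩
    rcases mem_restrictClause.1 hm' with ⟨l, hl, h'⟩
    exact ⟨l, hl, by rw [appLit_compSub, h', appSV, h]⟩

lemma clauseTrue_compSub (τ σ : Sub) (C : Clause) :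
    clauseTrue (compSub τ σ) C ↔ clauseTrue σ C ∨ clauseTrue τ (restrictClause σ C) := by
  constructor
  · rintro ⟨l, hl, h⟩
    rw [appLit_compSub] at h
    rcases h' : appLit σ l with b | m'
    · rw [h', appSV] at h
      left; exact ⟨l, hl, by rw [h']; exact congrArg Sum.inl (Sum.inl.inj h)⟩
    · rw [h', appSV] at h
      right; exact ⟨m', mem_restrictClause.2 ⟨l, hl, h'⟩, h⟩
  · rintro (⟨l, hl, h⟩ | ⟨m, hm, h⟩)
    · exact ⟨l, hl, by rw [appLit_compSub, h]; rfl⟩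
    · rcases mem_restrictClause.1 hm with ⟨l, hl, h'⟩
      exact ⟨l, hl, by rw [appLit_compSub, h', appSV, h]⟩

lemma mem_restrictCNF {σ : Sub} {Γ : CNF} {C : Clause} :
    C ∈ restrictCNF σ Γ ↔ ∃ D ∈ Γ, ¬ clauseTrue σ D ∧ restrictClause σ D = C := by
  unfold restrictCNF
  rw [Multiset.mem_map]
  constructor
  · rintro ⟨D, hD, rfl⟩
    rcases Multiset.mem_filter.1 hD with ⟨h1, h2⟩
    exact ⟨D, h1, by simpa using h2, rfl⟩
  · rintro ⟨D, h1, h2, rfl⟩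
    exact ⟨D, Multiset.mem_filter.2 ⟨h1, by simpa using h2⟩, rfl⟩

lemma mem_restrictCNF_restrictCNF {τ σ : Sub} {Γ : CNF} {C : Clause} :
    C ∈ restrictCNF τ (restrictCNF σ Γ) ↔ C ∈ restrictCNF (compSub τ σ) Γ := by
  rw [mem_restrictCNF, mem_restrictCNF]
  constructor
  · rintro ⟨E, hE, h2, rfl⟩
    rcases mem_restrictCNF.1 hE with ⟨D, hD, h1, rfl⟩
    refine ⟨D, hD, ?_, (restrictClause_compSub τ σ D)⟩
    rw [clauseTrue_compSub]
    tauto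
  · rintro ⟨D, hD, h, rfl⟩
    rw [clauseTrue_compSub] at h
    push_neg at h
    exact ⟨restrictClause σ D, mem_restrictCNF.2 ⟨D, hD, h.1, rfl⟩, h.2,
      (restrictClause_compSub τ σ D).symm⟩

/-- `UPFalse` only depends on the set of clauses of the formula. -/
lemma UPFalse_of_memEquiv {Γ : CNF} (h : UPFalse Γ) :
    ∀ Γ' : CNF, (∀ C, C ∈ Γ ↔ C ∈ Γ') → UPFalse Γ' := by
  induction h with
  | empty hmem => exact fun Γ' he => UPFalse.empty ((he _).1 hmem)
  | step l hmem _ ih =>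
    intro Γ' he
    refine UPFalse.step l ((he _).1 hmem) (ih _ ?_)
    intro C
    rw [mem_restrictCNF, mem_restrictCNF]
    constructor
    · rintro ⟨D, hD, h1, h2⟩; exact ⟨D, (he D).1 hD, h1, h2⟩
    · rintro ⟨D, hD, h1, h2⟩; exact ⟨D, (he D).2 hD, h1, h2⟩

lemma compSub_litSub {σ : Sub} {l : Lit} (h : appLit σ l = .inl true) :
    compSub σ (litSub l) = σ := by
  have hσ : σ l.1 = .inl l.2 := by
    rcases l with ⟨v, b⟩
    rcases hs : σ v with c | m <;> cases b <;> simp_all [appLit, negSV]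
  funext v
  by_cases hv : v = l.1
  · subst hv
    simp [compSub, litSub, appSV, hσ]
  · simp [compSub, litSub, hv, appSV, appLit]

lemma appLit_litSub_self (m : Lit) : appLit (litSub m) m = .inl true := by
  cases hb : m.2 <;> simp [appLit, litSub, hb, negSV]

lemma clauseTrue_singleton {σ : Sub} {l : Lit} :
    clauseTrue σ ({l} : Clause) ↔ appLit σ l = .inl true := by
  unfold clauseTrue; simp

lemma restrictClause_singleton (σ : Sub) (l : Lit) :
    restrictClause σ ({l} : Clause) =
      (match appLit σ l with | .inr m => ({m} : Clause) | _ => ∅) := by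
  unfold restrictClause
  exact Finset.singleton_biUnion

/-- Unit-propagation refutations are preserved by restriction. -/
lemma UPFalse_restrict {Γ : CNF} (h : UPFalse Γ) :
    ∀ σ : Sub, UPFalse (restrictCNF σ Γ) := by
  induction h with
  | @empty Γ hmem =>
    intro σ
    refine UPFalse.empty (mem_restrictCNF.2 ⟨∅, hmem, ?_, ?_⟩)
    · rintro ⟨l, hl, -⟩; exact absurd hl (by simp)
    · unfold restrictClause; simp
  | @step Γ l hmem _ ih =>
    intro σ
    rcases hσl : appLit σ l with b | m
    · cases b with
      | false =>
        -- the unit clause becomes empty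
        refine UPFalse.empty (mem_restrictCNF.2 ⟨{l}, hmem, ?_, ?_⟩)
        · rw [clauseTrue_singleton, hσl]; simp
        · rw [restrictClause_singleton, hσl]
      | true =>
        -- the unit clause is already satisfied by σ
        have key : compSub σ (litSub l) = σ := compSub_litSub hσl
        refine UPFalse_of_memEquiv (ih σ) _ (fun C => ?_)
        rw [mem_restrictCNF_restrictCNF, key]
    · -- the unit clause restricts to the unit clause {m}
      have hmem' : ({m} : Clause) ∈ restrictCNF σ Γ := by
        refine mem_restrictCNF.2 ⟨{l}, hmem, ?_, ?_⟩
        · rw [clauseTrue_singleton, hσl]; simp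
        · rw [restrictClause_singleton, hσl]
      refine UPFalse.step m hmem' ?_
      set σ' := compSub (litSub m) σ with hσ'
      have hσ'l : appLit σ' l = .inl true := by
        rw [hσ', appLit_compSub, hσl, appSV, appLit_litSub_self]
      have key : compSub σ' (litSub l) = σ' := compSub_litSub hσ'l
      refine UPFalse_of_memEquiv (ih σ') _ (fun C => ?_)
      rw [mem_restrictCNF_restrictCNF, key, hσ']
      rw [← mem_restrictCNF_restrictCNF]

lemma mem_negUnits {D : Clause} {C : Clause} :
    C ∈ negUnits D ↔ ∃ l ∈ D, C = ({negLit l} : Clause) := by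
  unfold negUnits
  rw [Multiset.mem_map]
  constructor
  · rintro ⟨l, hl, rfl⟩; exact ⟨l, hl, rfl⟩
  · rintro ⟨l, hl, rfl⟩; exact ⟨l, hl, rfl⟩

lemma mem_restrictCNF_add {σ : Sub} {Γ Γ' : CNF} {C : Clause} :
    C ∈ restrictCNF σ (Γ + Γ') ↔ C ∈ restrictCNF σ Γ ∨ C ∈ restrictCNF σ Γ' := by
  rw [mem_restrictCNF, mem_restrictCNF, mem_restrictCNF]
  constructor
  · rintro ⟨D, hD, h1, h2⟩
    rcases Multiset.mem_add.1 hD with h | h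
    · exact Or.inl ⟨D, h, h1, h2⟩
    · exact Or.inr ⟨D, h, h1, h2⟩
  · rintro (⟨D, hD, h1, h2⟩ | ⟨D, hD, h1, h2⟩)
    · exact ⟨D, Multiset.mem_add.2 (Or.inl hD), h1, h2⟩
    · exact ⟨D, Multiset.mem_add.2 (Or.inr hD), h1, h2⟩

/-- If `Γ ⊢₁ Δ`, then `Γ↾σ ⊢₁ Δ↾σ`. -/
theorem restriction_preserves_unit_implication (σ : Sub) (Γ Δ : CNF)
    (h : UPimpliesAll Γ Δ) :
    UPimpliesAll (restrictCNF σ Γ) (restrictCNF σ Δ) := by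
  intro D hD
  rcases mem_restrictCNF.1 hD with ⟨D₀, hD₀, hnt, rfl⟩
  have h₀ : UPFalse (Γ + negUnits D₀) := h D₀ hD₀
  have h₁ : UPFalse (restrictCNF σ (Γ + negUnits D₀)) := UPFalse_restrict h₀ σ
  refine UPFalse_of_memEquiv h₁ _ (fun C => ?_)
  rw [mem_restrictCNF_add, Multiset.mem_add]
  apply or_congr Iff.rfl
  rw [mem_restrictCNF, mem_negUnits]
  constructor
  · rintro ⟨E, hE, h1, rfl⟩
    rcases mem_negUnits.1 hE with ⟨l, hl, rfl⟩
    rcases hσl : appLit σ l with b | m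
    · cases b with
      | true => exact absurd ⟨l, hl, hσl⟩ hnt
      | false =>
        exfalso; apply h1
        rw [clauseTrue_singleton, appLit_negLit, hσl]; rfl
    · refine ⟨m, mem_restrictClause.2 ⟨l, hl, hσl⟩, ?_⟩
      rw [restrictClause_singleton, appLit_negLit, hσl, negSV]
  · rintro ⟨m, hm, rfl⟩
    rcases mem_restrictClause.1 hm with ⟨l, hl, hσl⟩
    refine ⟨{negLit l}, mem_negUnits.2 ⟨l, hl, rfl⟩, ?_, ?_⟩
    · rw [clauseTrue_singleton, appLit_negLit, hσl]; simp [negSV]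
    · rw [restrictClause_singleton, appLit_negLit, hσl, negSV]

end PaperMaxSAT
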